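/- arXiv:1407.1616 — 2 statements merged into one kernel-verified Lean document; each statement's English description precedes it below -/
import Mathlib

section
/- Let A and B be rings with J^s ⊆ I ⊆ J² in A, A/J semisimple, and suppose φ : B ≅ A/I is a ring isomorphism. Then B/rad(B) ≅ A/J, and rad(B)/rad(B)² ≅ J/(J² + I) ≅ (J/I)/((J/I)²) as B/rad(B)-bimodules (via φ). -/
private lemma ss_jacobson (R : Type*) [Ring R] [IsSemisimpleRing R] :
    (⊥ : Ideal R).jacobson = ⊥ := by
  by_contra h
  obtain ⟨c, hc⟩ := exists_isCompl ((⊥ : Ideal R).jacobson)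
  have hc_ne : c ≠ ⊤ := by
    rintro rfl
    exact h (by simpa using hc.inf_eq_bot)
  obtain ⟨m, hm, hcm⟩ := (eq_top_or_exists_le_coatom c).resolve_left hc_ne
  have hjm : (⊥ : Ideal R).jacobson ≤ m :=
    sInf_le ⟨bot_le, Ideal.isMaximal_def.mpr hm⟩
  exact hm.1 (top_le_iff.mp (hc.sup_eq_top ▸ sup_le hjm hcm))

private lemma jac_map {R S : Type*} [Ring R] [Ring S] (f : R →+* S)
    (hf : Function.Surjective f) {x : R} (hx : x ∈ (⊥ : Ideal R).jacobson) :
    f x ∈ (⊥ : Ideal S).jacobson := by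
  rw [Ideal.mem_jacobson_iff] at hx ⊢
  intro y
  obtain ⟨y', rfl⟩ := hf y
  obtain ⟨z, hz⟩ := hx y'
  rw [Ideal.mem_bot] at hz
  refine ⟨f z, ?_⟩
  rw [Ideal.mem_bot]
  have := congrArg f hz
  simpa using this

/-- factor map between quotients by nested two-sided ideals -/
private def factorMap {A : Type*} [Ring A] (I J : TwoSidedIdeal A)
    (h : ∀ x, x ∈ I → x ∈ J) : I.ringCon.Quotient →+* J.ringCon.Quotient where
  toFun := Quotient.lift (fun a => RingCon.mk' J.ringCon a) (fun a b hab =>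
    (RingCon.eq _).mpr ((J.rel_iff a b).mpr (h _ ((I.rel_iff a b).mp hab))))
  map_one' := rfl
  map_mul' := fun x y => Quotient.inductionOn₂ x y fun _ _ => rfl
  map_zero' := rfl
  map_add' := fun x y => Quotient.inductionOn₂ x y fun _ _ => rfl

private lemma factorMap_mk {A : Type*} [Ring A] (I J : TwoSidedIdeal A)
    (h : ∀ x, x ∈ I → x ∈ J) (a : A) :
    factorMap I J h (RingCon.mk' I.ringCon a) = RingCon.mk' J.ringCon a := rfl

private noncomputable def kerQuotEquiv {B S : Type*} [Ring B] [Ring S] (ψ : B →+* S)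
    (hψ : Function.Surjective ψ) :
    (TwoSidedIdeal.ker ψ).ringCon.Quotient ≃+* S := by
  refine RingEquiv.ofBijective
    ({ toFun := Quotient.lift ψ (fun a b h => h)
       map_one' := map_one ψ
       map_mul' := fun x y => Quotient.inductionOn₂ x y fun a b => map_mul ψ a b
       map_zero' := map_zero ψ
       map_add' := fun x y => Quotient.inductionOn₂ x y fun a b => map_add ψ a b } :
       (TwoSidedIdeal.ker ψ).ringCon.Quotient →+* S) ⟨?_, ?_⟩
  · intro x y
    refine Quotient.inductionOn₂ x y fun a b h => Quotient.sound h
  · intro s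
    obtain ⟨a, ha⟩ := hψ s
    exact ⟨RingCon.mk' _ a, ha⟩

private lemma kerQuotEquiv_mk {B S : Type*} [Ring B] [Ring S] (ψ : B →+* S)
    (hψ : Function.Surjective ψ) (b : B) :
    kerQuotEquiv ψ hψ (RingCon.mk' _ b) = ψ b := rfl

set_option maxHeartbeats 2000000 in
/-- Let `A` and `B` be rings with two-sided ideals `J^s ⊆ I ⊆ J²` in `A`,
`A/J` semisimple, and suppose `φ : B ≅ A/I` is a ring isomorphism.  Then
`B/rad(B) ≅ A/J`, and `rad(B)/rad(B)² ≅ J/(J² + I) ≅ (J/I)/((J/I)²)` as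
`B/rad(B)`-bimodules (via `φ`): there is an additive (`ℤ`-linear) isomorphism
compatible with the left and right multiplications, where `b ∈ B` acts on `J/(J²+I)`
through any representative `a ∈ A` of `φ b`. -/
theorem stmt10 (A : Type*) [Ring A] (I J : TwoSidedIdeal A)
    (sI sJ : Submodule ℤ A)
    (hsI : ∀ x : A, x ∈ sI ↔ x ∈ I) (hsJ : ∀ x : A, x ∈ sJ ↔ x ∈ J)
    (s : ℕ) (hs : 2 ≤ s) (hJsI : sJ ^ s ≤ sI) (hIJ2 : sI ≤ sJ ^ 2)
    (hss : IsSemisimpleRing J.ringCon.Quotient)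
    (B : Type*) [Ring B] (φ : B ≃+* I.ringCon.Quotient) :
    -- `B / rad B ≅ A / J`
    (∃ K : TwoSidedIdeal B, (∀ x : B, x ∈ K ↔ x ∈ (⊥ : Ideal B).jacobson) ∧
      Nonempty (K.ringCon.Quotient ≃+* J.ringCon.Quotient)) ∧
    -- `rad(B)/rad(B)² ≅ J/(J² + I)` as bimodules via `φ`
    (∃ e : (((⊥ : Ideal B).jacobson.restrictScalars ℤ) ⧸
            Submodule.comap ((⊥ : Ideal B).jacobson.restrictScalars ℤ).subtype
              (((⊥ : Ideal B).jacobson.restrictScalars ℤ) ^ 2)) ≃ₗ[ℤ]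
          (sJ ⧸ Submodule.comap sJ.subtype (sJ ^ 2 ⊔ sI)),
      (∀ (b : B) (a : A), φ b = RingCon.mk' I.ringCon a →
        ∀ (x : ((⊥ : Ideal B).jacobson.restrictScalars ℤ))
          (hbx : b * (x : B) ∈ (⊥ : Ideal B).jacobson.restrictScalars ℤ)
          (y : sJ) (hay : a * (y : A) ∈ sJ),
          e (Submodule.Quotient.mk x) = Submodule.Quotient.mk y →
          e (Submodule.Quotient.mk ⟨b * (x : B), hbx⟩)
            = Submodule.Quotient.mk ⟨a * (y : A), hay⟩) ∧
      (∀ (b : B) (a : A), φ b = RingCon.mk' I.ringCon a →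
        ∀ (x : ((⊥ : Ideal B).jacobson.restrictScalars ℤ))
          (hxb : (x : B) * b ∈ (⊥ : Ideal B).jacobson.restrictScalars ℤ)
          (y : sJ) (hya : (y : A) * a ∈ sJ),
          e (Submodule.Quotient.mk x) = Submodule.Quotient.mk y →
          e (Submodule.Quotient.mk ⟨(x : B) * b, hxb⟩)
            = Submodule.Quotient.mk ⟨(y : A) * a, hya⟩)) ∧
    -- `J/(J² + I) ≅ (J/I)/((J/I)²)`
    Nonempty ((sJ ⧸ Submodule.comap sJ.subtype (sJ ^ 2 ⊔ sI)) ≃ₗ[ℤ]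
      ((Submodule.map (RingCon.mk' I.ringCon).toAddMonoidHom.toIntLinearMap sJ) ⧸
        Submodule.comap
          (Submodule.map (RingCon.mk' I.ringCon).toAddMonoidHom.toIntLinearMap sJ).subtype
          ((Submodule.map (RingCon.mk' I.ringCon).toAddMonoidHom.toIntLinearMap sJ) ^ 2))) := by
  classical
  let π : A →+* I.ringCon.Quotient := RingCon.mk' I.ringCon
  let πₗ : A →ₗ[ℤ] I.ringCon.Quotient := (RingCon.mk' I.ringCon).toAddMonoidHom.toIntLinearMap
  let sJ' : Submodule ℤ I.ringCon.Quotient := Submodule.map πₗ sJ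
  have hπₗ : ∀ a : A, πₗ a = π a := fun _ => rfl
  -- basic facts
  have hπeq : ∀ a b : A, π a = π b ↔ a - b ∈ sI := by
    intro a b
    rw [show π a = (a : I.ringCon.Quotient) from rfl,
      show π b = (b : I.ringCon.Quotient) from rfl, RingCon.eq, I.rel_iff]
    exact (hsI _).symm
  have hπsur : Function.Surjective π := fun q => Quotient.inductionOn q fun a => ⟨a, rfl⟩
  have hπ0 : ∀ a : A, π a = 0 ↔ a ∈ sI := by
    intro a
    rw [show (0 : I.ringCon.Quotient) = π 0 from (map_zero π).symm, hπeq, sub_zero]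
  have hJJ : sJ * sJ ≤ sJ := by
    rw [Submodule.mul_le]
    intro m hm n hn
    exact (hsJ _).2 (J.mul_mem_left m n ((hsJ n).1 hn))
  have hsq : sJ ^ 2 = sJ * sJ := sq sJ
  have hsq' : sJ' ^ 2 = sJ' * sJ' := sq sJ'
  have hIJ : ∀ x : A, x ∈ sI → x ∈ sJ := fun x hx => hsq ▸ hIJ2 hx |> hJJ
  have hIJmem : ∀ x : A, x ∈ I → x ∈ J := fun x hx =>
    (hsJ x).1 (hIJ x ((hsI x).2 hx))
  -- map of products
  have hπalg : πₗ = (RingCon.mk' I.ringCon).toIntAlgHom.toLinearMap := rfl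
  have hmapmul : Submodule.map πₗ (sJ * sJ) = sJ' * sJ' := by
    rw [hπalg]; exact Submodule.map_mul sJ sJ _
  have hmappow : ∀ n : ℕ, Submodule.map πₗ (sJ ^ n) = sJ' ^ n := by
    intro n; rw [hπalg]; exact Submodule.map_pow sJ _ n
  -- membership in sJ' by representatives
  have hmemrep : ∀ a : A, π a ∈ sJ' ↔ a ∈ sJ := by
    intro a
    constructor
    · rintro ⟨j, hj, hja⟩
      have : a - j ∈ sI := (hπeq a j).1 (by rw [← hja]; rfl)
      have : a - j + j ∈ sJ := add_mem (hIJ _ this) hj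
      simpa using this
    · exact fun ha => Submodule.mem_map_of_mem ha
  -- left/right stability of sJ' and its square
  have hstabl : ∀ q w : I.ringCon.Quotient, w ∈ sJ' → q * w ∈ sJ' := by
    intro q w hw
    obtain ⟨c, rfl⟩ := hπsur q
    obtain ⟨j, hj, rfl⟩ := hw
    rw [hπₗ, ← map_mul]
    exact (hmemrep _).2 ((hsJ _).2 (J.mul_mem_left c j ((hsJ j).1 hj)))
  have hstabr : ∀ q w : I.ringCon.Quotient, w ∈ sJ' → w * q ∈ sJ' := by
    intro q w hw
    obtain ⟨c, rfl⟩ := hπsur q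
    obtain ⟨j, hj, rfl⟩ := hw
    rw [hπₗ, ← map_mul]
    exact (hmemrep _).2 ((hsJ _).2 (J.mul_mem_right j c ((hsJ j).1 hj)))
  have hstab2l : ∀ q w : I.ringCon.Quotient, w ∈ sJ' * sJ' → q * w ∈ sJ' * sJ' := by
    intro q w hw
    refine Submodule.mul_induction_on hw (fun m hm n hn => ?_) (fun u v hu hv => ?_)
    · rw [← mul_assoc]; exact Submodule.mul_mem_mul (hstabl q m hm) hn
    · rw [mul_add]; exact add_mem hu hv
  have hstab2r : ∀ q w : I.ringCon.Quotient, w ∈ sJ' * sJ' → w * q ∈ sJ' * sJ' := by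
    intro q w hw
    refine Submodule.mul_induction_on hw (fun m hm n hn => ?_) (fun u v hu hv => ?_)
    · rw [mul_assoc]; exact Submodule.mul_mem_mul hm (hstabr q n hn)
    · rw [add_mul]; exact add_mem hu hv
  -- units
  have hunit : ∀ w : I.ringCon.Quotient, w ∈ sJ' → IsUnit (1 + w) := by
    intro w hw
    refine IsNilpotent.isUnit_one_add ⟨s, ?_⟩
    have h1 : w ^ s ∈ sJ' ^ s := Submodule.pow_mem_pow sJ' hw s
    rw [← hmappow s] at h1
    obtain ⟨a, ha, haw⟩ := h1
    rw [← haw, hπₗ]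
    exact (hπ0 a).2 (hJsI ha)
  -- the quotient map A/I → A/J
  let ρ : I.ringCon.Quotient →+* J.ringCon.Quotient := factorMap I J hIJmem
  have hρsur : Function.Surjective ρ := by
    intro t
    obtain ⟨a, rfl⟩ : ∃ a, RingCon.mk' J.ringCon a = t :=
      Quotient.inductionOn t fun a => ⟨a, rfl⟩
    exact ⟨π a, rfl⟩
  have hJeq : ∀ a b : A, RingCon.mk' J.ringCon a = RingCon.mk' J.ringCon b ↔ a - b ∈ sJ := by
    intro a b
    rw [show RingCon.mk' J.ringCon a = (a : J.ringCon.Quotient) from rfl,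
      show RingCon.mk' J.ringCon b = (b : J.ringCon.Quotient) from rfl, RingCon.eq, J.rel_iff]
    exact (hsJ _).symm
  have hρ0 : ∀ q : I.ringCon.Quotient, ρ q = 0 ↔ q ∈ sJ' := by
    intro q
    obtain ⟨a, rfl⟩ := hπsur q
    rw [show ρ (π a) = RingCon.mk' J.ringCon a from rfl,
      show (0 : J.ringCon.Quotient) = RingCon.mk' J.ringCon 0 from (map_zero _).symm,
      hJeq, sub_zero, hmemrep]
  -- the radical of A/I is sJ'
  haveI : IsSemisimpleRing J.ringCon.Quotient := hss
  have hradQ : ∀ q : I.ringCon.Quotient,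
      q ∈ (⊥ : Ideal I.ringCon.Quotient).jacobson ↔ q ∈ sJ' := by
    intro q
    constructor
    · intro hq
      have := jac_map ρ hρsur hq
      rw [ss_jacobson, Ideal.mem_bot] at this
      exact (hρ0 q).1 this
    · intro hq
      rw [Ideal.mem_jacobson_iff]
      intro y
      obtain ⟨u, hu⟩ := hunit (y * q) (hstabl y _ hq)
      refine ⟨((u⁻¹ : _) : I.ringCon.Quotient), ?_⟩
      rw [Ideal.mem_bot, sub_eq_zero]
      have huv : ((u⁻¹ : _) : I.ringCon.Quotient) * (1 + y * q) = 1 := by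
        rw [← hu]; exact u.inv_mul
      calc ((u⁻¹ : _) : I.ringCon.Quotient) * y * q + ((u⁻¹ : _) : I.ringCon.Quotient)
          = ((u⁻¹ : _) : I.ringCon.Quotient) * (1 + y * q) := by
            rw [mul_add, mul_one, ← mul_assoc, add_comm]
        _ = 1 := huv
  have hjacB : ∀ x : B, x ∈ (⊥ : Ideal B).jacobson ↔ φ x ∈ sJ' := by
    intro x
    constructor
    · intro hx
      exact (hradQ _).1 (jac_map φ.toRingHom φ.surjective hx)
    · intro hx
      have := jac_map φ.symm.toRingHom φ.symm.surjective ((hradQ _).2 hx)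
      simpa using this
  -- part 1
  let ψ : B →+* J.ringCon.Quotient := ρ.comp φ.toRingHom
  have hψsur : Function.Surjective ψ := hρsur.comp φ.surjective
  have part1 : ∃ K : TwoSidedIdeal B, (∀ x : B, x ∈ K ↔ x ∈ (⊥ : Ideal B).jacobson) ∧
      Nonempty (K.ringCon.Quotient ≃+* J.ringCon.Quotient) := by
    refine ⟨TwoSidedIdeal.ker ψ, fun x => ?_, ⟨kerQuotEquiv ψ hψsur⟩⟩
    rw [TwoSidedIdeal.mem_ker, hjacB]
    exact (show ψ x = ρ (φ x) from rfl) ▸ hρ0 (φ x)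
  -- part 2 and 3 : linear algebra
  let RB : Submodule ℤ B := (⊥ : Ideal B).jacobson.restrictScalars ℤ
  let φₗ : B →ₗ[ℤ] I.ringCon.Quotient := φ.toRingHom.toAddMonoidHom.toIntLinearMap
  have hφₗ : ∀ x : B, φₗ x = φ x := fun _ => rfl
  have hφRB : Submodule.map φₗ RB = sJ' := by
    ext q
    constructor
    · rintro ⟨x, hx, rfl⟩
      exact (hjacB x).1 hx
    · intro hq
      exact ⟨φ.symm q, (hjacB _).2 (by simpa using hq), by simp [hφₗ]⟩
  have hφalg : φₗ = φ.toRingHom.toIntAlgHom.toLinearMap := rfl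
  have hφmul : Submodule.map φₗ (RB * RB) = sJ' * sJ' := by
    rw [hφalg, Submodule.map_mul, ← hφalg, hφRB]
  -- the two quotient submodules
  let N' : Submodule ℤ sJ' := Submodule.comap sJ'.subtype (sJ' ^ 2)
  let N3 : Submodule ℤ sJ := Submodule.comap sJ.subtype (sJ ^ 2 ⊔ sI)
  let N2 : Submodule ℤ RB := Submodule.comap RB.subtype (RB ^ 2)
  have hsupJ : sJ ^ 2 ⊔ sI = sJ ^ 2 := sup_eq_left.mpr hIJ2
  -- e₃ : sJ ⧸ N3 ≃ sJ' ⧸ N'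
  let g₃ : sJ →ₗ[ℤ] sJ' := LinearMap.codRestrict sJ' (πₗ.comp sJ.subtype)
    (fun u => Submodule.mem_map_of_mem u.2)
  let f₃ : sJ →ₗ[ℤ] (sJ' ⧸ N') := N'.mkQ.comp g₃
  have hf₃ : ∀ u : sJ, f₃ u = Submodule.Quotient.mk (g₃ u) := fun _ => rfl
  have hg₃ : ∀ u : sJ, (g₃ u : I.ringCon.Quotient) = π (u : A) := fun _ => rfl
  have h₃le : N3 ≤ LinearMap.ker f₃ := by
    intro u hu
    have hu' : (u : A) ∈ sJ ^ 2 := by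
      have := Submodule.mem_comap.1 hu
      rwa [hsupJ] at this
    rw [LinearMap.mem_ker, hf₃, Submodule.Quotient.mk_eq_zero]
    refine Submodule.mem_comap.2 ?_
    show (g₃ u : I.ringCon.Quotient) ∈ sJ' ^ 2
    rw [hg₃, ← hmappow 2]
    exact Submodule.mem_map_of_mem hu'
  have h₃ker : LinearMap.ker f₃ ≤ N3 := by
    intro u hu
    rw [LinearMap.mem_ker, hf₃, Submodule.Quotient.mk_eq_zero] at hu
    have hu' : π (u : A) ∈ sJ' ^ 2 := by
      have := Submodule.mem_comap.1 hu
      rwa [Submodule.subtype_apply, hg₃] at this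
    rw [← hmappow 2] at hu'
    obtain ⟨w, hw, hwu⟩ := hu'
    have hsub : (u : A) - w ∈ sI := (hπeq _ _).1 ((hπₗ w) ▸ hwu).symm
    refine Submodule.mem_comap.2 ?_
    show (u : A) ∈ sJ ^ 2 ⊔ sI
    exact Submodule.mem_sup.2 ⟨w, hw, (u : A) - w, hsub, by abel⟩
  let F₃ := N3.liftQ f₃ h₃le
  have hF₃inj : Function.Injective F₃ :=
    LinearMap.ker_eq_bot.mp (Submodule.ker_liftQ_eq_bot N3 f₃ h₃le h₃ker)
  have hF₃sur : Function.Surjective F₃ := by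
    intro t
    obtain ⟨v, rfl⟩ := Submodule.Quotient.mk_surjective N' t
    obtain ⟨a, ha, hav⟩ := v.2
    refine ⟨Submodule.Quotient.mk ⟨a, ha⟩, ?_⟩
    rw [show F₃ (Submodule.Quotient.mk ⟨a, ha⟩) = f₃ ⟨a, ha⟩ from rfl, hf₃]
    congr 1
    exact Subtype.ext (by rw [hg₃]; exact hav)
  let e₃ : (sJ ⧸ N3) ≃ₗ[ℤ] (sJ' ⧸ N') := LinearEquiv.ofBijective F₃ ⟨hF₃inj, hF₃sur⟩
  have he₃ : ∀ u : sJ, e₃ (Submodule.Quotient.mk u) = Submodule.Quotient.mk (g₃ u) :=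
    fun u => rfl
  -- e₂ : RB ⧸ N2 ≃ sJ' ⧸ N'
  let g₂ : RB →ₗ[ℤ] sJ' := LinearMap.codRestrict sJ' (φₗ.comp RB.subtype)
    (fun u => hφRB ▸ Submodule.mem_map_of_mem u.2)
  let f₂ : RB →ₗ[ℤ] (sJ' ⧸ N') := N'.mkQ.comp g₂
  have hf₂ : ∀ u : RB, f₂ u = Submodule.Quotient.mk (g₂ u) := fun _ => rfl
  have hg₂ : ∀ u : RB, (g₂ u : I.ringCon.Quotient) = φ (u : B) := fun _ => rfl
  have hRBsq : Submodule.map φₗ (RB ^ 2) = sJ' ^ 2 := by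
    rw [sq RB, sq sJ']
    exact hφmul
  have h₂le : N2 ≤ LinearMap.ker f₂ := by
    intro u hu
    rw [LinearMap.mem_ker, hf₂, Submodule.Quotient.mk_eq_zero]
    refine Submodule.mem_comap.2 ?_
    show (g₂ u : I.ringCon.Quotient) ∈ sJ' ^ 2
    rw [hg₂, ← hRBsq]
    exact Submodule.mem_map_of_mem (Submodule.mem_comap.1 hu)
  have h₂ker : LinearMap.ker f₂ ≤ N2 := by
    intro u hu
    rw [LinearMap.mem_ker, hf₂, Submodule.Quotient.mk_eq_zero] at hu
    have hu' : φ (u : B) ∈ sJ' ^ 2 := by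
      have := Submodule.mem_comap.1 hu
      rwa [Submodule.subtype_apply, hg₂] at this
    rw [← hRBsq] at hu'
    obtain ⟨w, hw, hwu⟩ := hu'
    have : w = (u : B) := φ.injective ((hφₗ w) ▸ hwu)
    refine Submodule.mem_comap.2 ?_
    rw [Submodule.subtype_apply, ← this]
    exact hw
  let F₂ := N2.liftQ f₂ h₂le
  have hF₂inj : Function.Injective F₂ :=
    LinearMap.ker_eq_bot.mp (Submodule.ker_liftQ_eq_bot N2 f₂ h₂le h₂ker)
  have hF₂sur : Function.Surjective F₂ := by
    intro t
    obtain ⟨v, rfl⟩ := Submodule.Quotient.mk_surjective N' t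
    have hv : (v : I.ringCon.Quotient) ∈ Submodule.map φₗ RB := by rw [hφRB]; exact v.2
    obtain ⟨x, hx, hxv⟩ := hv
    refine ⟨Submodule.Quotient.mk ⟨x, hx⟩, ?_⟩
    rw [show F₂ (Submodule.Quotient.mk ⟨x, hx⟩) = f₂ ⟨x, hx⟩ from rfl, hf₂]
    congr 1
    exact Subtype.ext (by rw [hg₂]; exact hxv)
  let e₂ : (RB ⧸ N2) ≃ₗ[ℤ] (sJ' ⧸ N') := LinearEquiv.ofBijective F₂ ⟨hF₂inj, hF₂sur⟩
  have he₂ : ∀ u : RB, e₂ (Submodule.Quotient.mk u) = Submodule.Quotient.mk (g₂ u) :=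
    fun u => rfl
  let e : (RB ⧸ N2) ≃ₗ[ℤ] (sJ ⧸ N3) := e₂ ≪≫ₗ e₃.symm
  have key : ∀ (u : RB) (v : sJ),
      (e (Submodule.Quotient.mk u) = Submodule.Quotient.mk v) ↔
      (φ (u : B) - π (v : A) ∈ sJ' ^ 2) := by
    intro u v
    rw [show e = e₂ ≪≫ₗ e₃.symm from rfl, LinearEquiv.trans_apply,
      LinearEquiv.symm_apply_eq, he₂, he₃, Submodule.Quotient.eq]
    show g₂ u - g₃ v ∈ N' ↔ _
    rw [Submodule.mem_comap]
    show ((g₂ u - g₃ v : sJ') : I.ringCon.Quotient) ∈ sJ' ^ 2 ↔ _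
    rw [Submodule.coe_sub, hg₂, hg₃]
  refine ⟨part1, ⟨e, ?_, ?_⟩, ⟨e₃⟩⟩
  · intro b a hba x hbx y hay hxy
    rw [key] at hxy ⊢
    have h1 : φ (b * (x : B)) = π a * φ (x : B) := by rw [map_mul, hba]
    have h2 : π (a * (y : A)) = π a * π (y : A) := map_mul π a (y : A)
    rw [h1, h2, ← mul_sub]
    rw [hsq'] at hxy ⊢
    exact hstab2l (π a) _ hxy
  · intro b a hba x hxb y hya hxy
    rw [key] at hxy ⊢
    have h1 : φ ((x : B) * b) = φ (x : B) * π a := by rw [map_mul, hba]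
    have h2 : π ((y : A) * a) = π (y : A) * π a := map_mul π (y : A) a
    rw [h1, h2, ← sub_mul]
    rw [hsq'] at hxy ⊢
    exact hstab2r (π a) _ hxy
end

section
/- Let Λ be a finite-dimensional k-algebra, G a finite group acting on Λ by k-algebra automorphisms with |G| invertible in k, and ΛG the skew group algebra. If r = rad(Λ), then rΛG = rad(ΛG) and (ΛG)/(rad(ΛG)) ≅ (Λ/r)G as k-algebras. -/
open Ideal Submodule

section Nilp

variable {k : Type} [Field k] {A : Type} [Ring A] [Algebra k A]

/-- right multiplication as a left-`A`-linear map -/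
private def rmul (a : A) : A →ₗ[A] A where
  toFun x := x * a
  map_add' x y := add_mul x y a
  map_smul' c x := by simp only [smul_eq_mul, RingHom.id_apply, mul_assoc]

private lemma jac_mul_right {x y : A} (hx : x ∈ jacobson (⊥ : Ideal A)) :
    x * y ∈ jacobson (⊥ : Ideal A) :=
  by rw [Ideal.jacobson_bot] at hx ⊢; exact Ideal.mul_mem_right y _ hx

private lemma nak_aux [FiniteDimensional k A] (l : List A) :
    ∀ (W : Submodule k A),
      W ≤ Submodule.restrictScalars k (jacobson (⊥ : Ideal A)) * W →
      (∀ y ∈ l, y ∈ W) →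
      (∀ x ∈ W, x ∈ Submodule.span A {y | y ∈ l}) → W = ⊥ := by
  induction l with
  | nil =>
    intro W _ _ hspan
    rw [eq_bot_iff]
    intro x hx
    have := hspan x hx
    simp only [List.not_mem_nil, Set.setOf_false, Submodule.span_empty,
      Submodule.mem_bot] at this
    simpa using this
  | cons a t ih =>
    intro W hW hmem hspan
    have hsets : {y | y ∈ a :: t} = insert a {y | y ∈ t} := by
      ext y; simp [List.mem_cons]
    -- every element of r * W lies in (r·a) ⊔ span A t
    have key : Submodule.restrictScalars k (jacobson (⊥ : Ideal A)) * W ≤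
        Submodule.restrictScalars k
          (Submodule.map (rmul a) (jacobson (⊥ : Ideal A)) ⊔ Submodule.span A {y | y ∈ t}) := by
      rw [Submodule.mul_le]
      intro m hm w hw
      have hm' : m ∈ jacobson (⊥ : Ideal A) := hm
      have hw' : w ∈ Submodule.span A (insert a {y | y ∈ t}) := by
        rw [← hsets]; exact hspan w hw
      obtain ⟨c, z, hz, rfl⟩ := Submodule.mem_span_insert.mp hw'
      have h1 : m * (c • a) ∈ Submodule.map (rmul a) (jacobson (⊥ : Ideal A)) := by
        refine ⟨m * c, jac_mul_right hm', ?_⟩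
        simp only [rmul, LinearMap.coe_mk, AddHom.coe_mk, smul_eq_mul, mul_assoc]
      have h2 : m * z ∈ Submodule.span A {y | y ∈ t} := by
        have := Submodule.smul_mem (Submodule.span A {y | y ∈ t}) m hz
        simpa [smul_eq_mul] using this
      simp only [Submodule.restrictScalars_mem, mul_add]
      exact Submodule.add_mem _ (Submodule.mem_sup_left h1) (Submodule.mem_sup_right h2)
    have haW : a ∈ W := hmem a (List.mem_cons_self)
    have ha : a ∈ Submodule.map (rmul a) (jacobson (⊥ : Ideal A)) ⊔
          Submodule.span A {y | y ∈ t} := key (hW haW)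
    obtain ⟨b, hb, z, hz, hbz⟩ := Submodule.mem_sup.mp ha
    obtain ⟨b', hb', rfl⟩ := hb
    -- b' ∈ jacobson ⊥, get left quasi-inverse of 1 - b'
    obtain ⟨zz, hzz⟩ := Ideal.mem_jacobson_iff.mp hb' (-1)
    rw [Ideal.mem_bot] at hzz
    have hzz1 : zz * (1 - b') = 1 := by
      have h3 : zz * (1 - b') = zz * -1 * b' + zz := by noncomm_ring
      rw [h3, ← sub_eq_zero]; exact hzz
    have haz : a ∈ Submodule.span A {y | y ∈ t} := by
      have hval : rmul a b' = b' * a := rfl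
      have h4 : (1 - b') * a = z := by
        rw [hval] at hbz
        rw [sub_mul, one_mul, eq_comm, eq_sub_iff_add_eq, add_comm z]
        exact hbz
      have h5 : a = zz • z := by
        rw [smul_eq_mul, ← h4, ← mul_assoc, hzz1, one_mul]
      rw [h5]
      exact Submodule.smul_mem _ zz hz
    refine ih W hW (fun y hy => hmem y (List.mem_cons_of_mem a hy)) ?_
    intro x hx
    have hx' : x ∈ Submodule.span A (insert a {y | y ∈ t}) := by
      rw [← hsets]; exact hspan x hx
    obtain ⟨c, z, hz, rfl⟩ := Submodule.mem_span_insert.mp hx'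
    exact Submodule.add_mem _ (Submodule.smul_mem _ c haz) hz

/-- The radical of a finite-dimensional algebra is nilpotent (as a `k`-subspace power). -/
private lemma jac_pow_bot [FiniteDimensional k A] :
    ∃ N : ℕ, (Submodule.restrictScalars k (jacobson (⊥ : Ideal A))) ^ (N + 1) = ⊥ := by
  set rk := Submodule.restrictScalars k (jacobson (⊥ : Ideal A)) with hrk
  have hmul : rk * rk ≤ rk := by
    rw [Submodule.mul_le]
    intro m hm n hn
    exact (jacobson (⊥ : Ideal A)).mul_mem_left m hn
  have hsucc : ∀ n : ℕ, rk ^ (n + 2) ≤ rk ^ (n + 1) := by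
    intro n
    induction n with
    | zero => rw [pow_one]; rw [show (2 : ℕ) = 1 + 1 from rfl, pow_succ, pow_one]; exact hmul
    | succ m ihm =>
      have : rk ^ (m + 3) = rk ^ (m + 2) * rk := by rw [pow_succ]
      rw [this, show m + 1 + 1 = m + 2 from rfl, pow_succ]
      exact mul_le_mul' ihm le_rfl
  have hanti : ∀ {n m : ℕ}, n ≤ m → rk ^ (m + 1) ≤ rk ^ (n + 1) := by
    intro n m h
    induction h with
    | refl => exact le_rfl
    | step h ih => exact le_trans (hsucc _) ih
  haveI : IsArtinian k A := inferInstance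
  obtain ⟨n, hn⟩ := IsArtinian.monotone_stabilizes
    (⟨fun n => OrderDual.toDual (rk ^ (n + 1)), fun a b hab => hanti hab⟩ : ℕ →o (Submodule k A)ᵒᵈ)
  have hstab : rk ^ (n + 1) = rk ^ (n + 2) := congrArg OrderDual.ofDual (hn (n + 1) (by omega))
  refine ⟨n, ?_⟩
  obtain ⟨s, hs⟩ : (rk ^ (n + 1)).FG := IsNoetherian.noetherian _
  have hlset : {y | y ∈ s.toList} = (s : Set A) := by
    ext y; simp [Finset.mem_toList]
  refine nak_aux s.toList (rk ^ (n + 1)) ?_ ?_ ?_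
  · exact le_of_eq (hstab.trans (pow_succ' rk (n + 1)))
  · intro y hy
    rw [Finset.mem_toList] at hy
    rw [← hs]
    exact Submodule.subset_span hy
  · intro x hx
    rw [hlset]
    rw [← hs] at hx
    exact Submodule.span_subset_span k A _ hx

private lemma smul_jac {G : Type} [Group G] [MulSemiringAction G A] (σ : G) {x : A}
    (hx : x ∈ jacobson (⊥ : Ideal A)) : σ • x ∈ jacobson (⊥ : Ideal A) := by
  have e := MulSemiringAction.toRingEquiv G A σ
  have hmap : Ideal.map (MulSemiringAction.toRingEquiv G A σ : A →+* A)
      (jacobson (⊥ : Ideal A)) = jacobson (⊥ : Ideal A) := by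
    rw [Ideal.map_jacobson_of_bijective (MulSemiringAction.toRingEquiv G A σ).bijective,
      Ideal.map_bot]
  rw [← hmap]
  exact Ideal.mem_map_of_mem _ hx

/-- An Artinian (here: finite-dimensional) ring with trivial Jacobson radical is semisimple. -/
private lemma ssr [FiniteDimensional k A] (hj : jacobson (⊥ : Ideal A) = ⊥) :
    IsSemisimpleRing A := by
  rcases subsingleton_or_nontrivial A with hA | hA
  · haveI : Subsingleton (Submodule A A) := by
      constructor
      intro p q
      ext x
      rw [Subsingleton.elim x 0]
      simp
    exact inferInstance
  · classical
    haveI : IsArtinian k A := inferInstance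
    haveI : IsArtinian A A := isArtinian_of_tower k inferInstance
    -- find a finite set of maximal left ideals with trivial intersection
    set 𝒮 : Set (Ideal A) :=
      {N | ∃ s : Finset (Ideal A), (∀ P ∈ s, P.IsMaximal) ∧ N = s.inf id} with h𝒮
    obtain ⟨E, ⟨s, hsmax, hEs⟩, hEmin⟩ :=
      IsArtinian.set_has_minimal 𝒮 ⟨⊤, ⟨∅, by simp, by simp⟩⟩
    have hle : E ≤ jacobson (⊥ : Ideal A) := by
      refine le_sInf ?_
      rintro P ⟨-, hPmax⟩
      have hEP : E ⊓ P ∈ 𝒮 := ⟨insert P s, ?_, ?_⟩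
      · have hnotlt := hEmin (E ⊓ P) hEP
        have heq : E ⊓ P = E := by
          rcases lt_or_eq_of_le (inf_le_left : E ⊓ P ≤ E) with h | h
          · exact absurd h hnotlt
          · exact h
        rw [← heq]; exact inf_le_right
      · intro Q hQ
        rcases Finset.mem_insert.mp hQ with rfl | hQ
        · exact hPmax
        · exact hsmax Q hQ
      · rw [Finset.inf_insert, hEs]; exact (inf_comm _ _).symm
    have hEbot : E = ⊥ := le_bot_iff.mp (hj ▸ hle)
    rw [hEbot] at hEs
    -- embed A into the product of the simple quotients
    haveI hsimple : ∀ P : s, IsSimpleModule A (A ⧸ (P : Ideal A)) := fun P =>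
      isSimpleModule_iff_isCoatom.mpr (Ideal.isMaximal_def.mp (hsmax P P.2))
    let f : A →ₗ[A] ((P : s) → A ⧸ (P : Ideal A)) :=
      LinearMap.pi fun P => (P : Ideal A).mkQ
    have hker : LinearMap.ker f = ⊥ := by
      rw [LinearMap.ker_pi]
      simp only [Submodule.ker_mkQ]
      rw [eq_bot_iff]
      intro x hx
      simp only [Submodule.mem_iInf] at hx
      have : x ∈ s.inf id := by
        rw [Finset.inf_eq_iInf]
        simp only [Submodule.mem_iInf, id]
        intro P hP
        exact hx ⟨P, hP⟩
      rw [hEs]; exact this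
    have hinj : Function.Injective f := by
      rw [← LinearMap.ker_eq_bot]; exact hker
    haveI : IsSemisimpleModule A ((P : s) → A ⧸ (P : Ideal A)) := by
      refine isSemisimpleModule_of_isSemisimpleModule_submodule'
        (p := fun P => LinearMap.range (LinearMap.single A (fun P : s => A ⧸ (P : Ideal A)) P))
        (fun P => ?_) (LinearMap.iSup_range_single A _)
      exact IsSemisimpleModule.congr
        (LinearEquiv.ofInjective _ (Pi.single_injective (M := fun P : s => A ⧸ (P : Ideal A)) P)).symm
    haveI : IsSemisimpleModule A (LinearMap.range f) := inferInstance
    exact IsSemisimpleModule.of_injective f hinj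

end Nilp

section SkewSec
open scoped Classical

structure Skew (k Λ G S : Type) [Field k] [Ring Λ] [Algebra k Λ] [Group G] [Fintype G]
    [MulSemiringAction G Λ] [Ring S] [Algebra k S] where
  ι : Λ →ₐ[k] S
  u : G → S
  hu1 : u 1 = 1
  humul : ∀ σ τ : G, u σ * u τ = u (σ * τ)
  hcomm : ∀ (σ : G) (b : Λ), u σ * ι b = ι (σ • b) * u σ
  hbasis : ∀ s : S, ∃! c : G → Λ, s = ∑ σ : G, ι (c σ) * u σ

namespace Skew

variable {k Λ G S : Type} [Field k] [Ring Λ] [Algebra k Λ] [Group G] [Fintype G]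
    [MulSemiringAction G Λ] [Ring S] [Algebra k S] (D : Skew k Λ G S)

def el (c : G → Λ) : S := ∑ σ : G, D.ι (c σ) * D.u σ

noncomputable def coeff (s : S) : G → Λ := (D.hbasis s).choose

lemma el_coeff (s : S) : D.el (D.coeff s) = s := ((D.hbasis s).choose_spec.1).symm

lemma coeff_el (c : G → Λ) : D.coeff (D.el c) = c :=
  ((D.hbasis (D.el c)).choose_spec.2 c rfl).symm

lemma el_injective : Function.Injective D.el := fun c c' h => by
  rw [← D.coeff_el c, ← D.coeff_el c', h]

lemma el_zero : D.el (fun _ => 0) = 0 := by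
  simp [el]

lemma el_add (a b : G → Λ) : D.el (fun σ => a σ + b σ) = D.el a + D.el b := by
  simp [el, add_mul, Finset.sum_add_distrib]

lemma el_mul (a b : G → Λ) :
    D.el a * D.el b = D.el (fun ρ => ∑ σ : G, a σ * σ • b (σ⁻¹ * ρ)) := by
  unfold el
  rw [Finset.sum_mul_sum]
  have step : ∀ σ τ : G,
      (D.ι (a σ) * D.u σ) * (D.ι (b τ) * D.u τ) = D.ι (a σ * σ • b τ) * D.u (σ * τ) := by
    intro σ τ
    calc (D.ι (a σ) * D.u σ) * (D.ι (b τ) * D.u τ)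
        = D.ι (a σ) * ((D.u σ * D.ι (b τ)) * D.u τ) := by
          rw [mul_assoc, mul_assoc]
      _ = D.ι (a σ) * ((D.ι (σ • b τ) * D.u σ) * D.u τ) := by rw [D.hcomm]
      _ = (D.ι (a σ) * D.ι (σ • b τ)) * (D.u σ * D.u τ) := by
          rw [mul_assoc, mul_assoc]
      _ = D.ι (a σ * σ • b τ) * D.u (σ * τ) := by rw [_root_.map_mul, D.humul]
  calc ∑ σ : G, ∑ τ : G, (D.ι (a σ) * D.u σ) * (D.ι (b τ) * D.u τ)
      = ∑ σ : G, ∑ ρ : G, D.ι (a σ * σ • b (σ⁻¹ * ρ)) * D.u ρ := by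
        refine Finset.sum_congr rfl fun σ _ => ?_
        refine Fintype.sum_equiv (Equiv.mulLeft σ) _ _ fun τ => ?_
        rw [step]
        simp only [Equiv.coe_mulLeft]
        rw [inv_mul_cancel_left]
    _ = ∑ ρ : G, ∑ σ : G, D.ι (a σ * σ • b (σ⁻¹ * ρ)) * D.u ρ := Finset.sum_comm
    _ = ∑ ρ : G, D.ι (∑ σ : G, a σ * σ • b (σ⁻¹ * ρ)) * D.u ρ := by
        refine Finset.sum_congr rfl fun ρ _ => ?_
        rw [map_sum, Finset.sum_mul]

lemma coeff_mul (x y : S) :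
    D.coeff (x * y) = fun ρ => ∑ σ : G, D.coeff x σ * σ • D.coeff y (σ⁻¹ * ρ) := by
  conv_lhs => rw [← D.el_coeff x, ← D.el_coeff y, el_mul, coeff_el]

lemma el_one : D.el (fun σ => if σ = 1 then 1 else 0) = 1 := by
  unfold el
  rw [Finset.sum_eq_single (1 : G)]
  · simp [D.hu1]
  · intro σ _ hσ
    simp [hσ]
  · intro h
    exact absurd (Finset.mem_univ 1) h

lemma el_iota (a : Λ) : D.el (fun σ => if σ = 1 then a else 0) = D.ι a := by
  unfold el
  rw [Finset.sum_eq_single (1 : G)]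
  · simp [D.hu1]
  · intro σ _ hσ
    simp [hσ]
  · intro h
    exact absurd (Finset.mem_univ 1) h

lemma u_inv_mul (σ : G) : D.u σ⁻¹ * D.u σ = 1 := by
  rw [D.humul, inv_mul_cancel, D.hu1]

lemma u_mul_inv (σ : G) : D.u σ * D.u σ⁻¹ = 1 := by
  rw [D.humul, mul_inv_cancel, D.hu1]

lemma coeff_add (x y : S) : D.coeff (x + y) = fun σ => D.coeff x σ + D.coeff y σ := by
  have h : D.el (fun σ => D.coeff x σ + D.coeff y σ) = x + y := by
    rw [el_add, el_coeff, el_coeff]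
  rw [← h, coeff_el]

lemma coeff_zero : D.coeff 0 = fun _ => 0 := by
  rw [← D.el_zero, coeff_el]

lemma coeff_one : D.coeff 1 = fun σ => if σ = 1 then 1 else 0 := by
  rw [← D.el_one, coeff_el]

lemma coeff_iota (a : Λ) : D.coeff (D.ι a) = fun σ => if σ = 1 then a else 0 := by
  rw [← D.el_iota, coeff_el]

end Skew

end SkewSec


/-- Let `Λ` be a finite-dimensional `k`-algebra, `G` a finite group acting on
`Λ` by `k`-algebra automorphisms with `|G|` invertible in `k`, and `ΛG` the skew group
algebra (a `k`-algebra `S` which is free as a left `Λ`-module with basis `{u_σ}` and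
multiplication determined by `u_σ · b = (σ • b) · u_σ`).  If `r = rad Λ`, then
`rΛG = rad (ΛG)` and `(ΛG)/rad(ΛG) ≅ (Λ/r)G` as `k`-algebras, where `(Λ/r)G` is the skew
group algebra of the induced `G`-action on `Λ/r`. -/
theorem stmt15 (k : Type) [Field k] (Λ : Type) [Ring Λ] [Algebra k Λ]
    [FiniteDimensional k Λ]
    (G : Type) [Group G] [Fintype G] [MulSemiringAction G Λ]
    (hkact : ∀ (σ : G) (c : k) (x : Λ), σ • (c • x) = c • (σ • x))
    (hcard : (Fintype.card G : k) ≠ 0)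
    -- `S` is the skew group algebra `ΛG`
    (S : Type) [Ring S] [Algebra k S] (ι : Λ →ₐ[k] S) (u : G → S)
    (hu1 : u 1 = 1)
    (humul : ∀ σ τ : G, u σ * u τ = u (σ * τ))
    (hcomm : ∀ (σ : G) (b : Λ), u σ * ι b = ι (σ • b) * u σ)
    (hbasis : ∀ s : S, ∃! c : G → Λ, s = ∑ σ : G, ι (c σ) * u σ)
    -- `Λq` is the semisimple quotient `Λ/r` with the induced `G`-action
    (Λq : Type) [Ring Λq] [Algebra k Λq] (π : Λ →ₐ[k] Λq)
    (hπsurj : Function.Surjective π)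
    (hπker : ∀ x : Λ, π x = 0 ↔ x ∈ (⊥ : Ideal Λ).jacobson)
    [MulSemiringAction G Λq] (hπact : ∀ (σ : G) (x : Λ), π (σ • x) = σ • π x)
    -- `T` is the skew group algebra `(Λ/r)G`
    (T : Type) [Ring T] [Algebra k T] (ιT : Λq →ₐ[k] T) (uT : G → T)
    (huT1 : uT 1 = 1)
    (huTmul : ∀ σ τ : G, uT σ * uT τ = uT (σ * τ))
    (hcommT : ∀ (σ : G) (b : Λq), uT σ * ιT b = ιT (σ • b) * uT σ)
    (hbasisT : ∀ t : T, ∃! c : G → Λq, t = ∑ σ : G, ιT (c σ) * uT σ) :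
    -- `rad (ΛG) = r · ΛG`
    (∀ s : S, s ∈ (⊥ : Ideal S).jacobson ↔
      ∃ c : G → Λ, (∀ σ, c σ ∈ (⊥ : Ideal Λ).jacobson) ∧ s = ∑ σ : G, ι (c σ) * u σ) ∧
    -- `(ΛG)/rad(ΛG) ≅ (Λ/r)G` as `k`-algebras
    (∃ K : TwoSidedIdeal S, (∀ s : S, s ∈ K ↔ s ∈ (⊥ : Ideal S).jacobson) ∧
      ∃ Ψ : K.ringCon.Quotient ≃+* T,
        ∀ c : k, Ψ (RingCon.mk' K.ringCon (algebraMap k S c)) = algebraMap k T c) := by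
  classical
  set r : Ideal Λ := (⊥ : Ideal Λ).jacobson with hrdef
  let DS : Skew k Λ G S := ⟨ι, u, hu1, humul, hcomm, hbasis⟩
  let DT : Skew k Λq G T := ⟨ιT, uT, huT1, huTmul, hcommT, hbasisT⟩
  have hDSel : ∀ c : G → Λ, DS.el c = ∑ σ : G, ι (c σ) * u σ := fun _ => rfl
  have hDTel : ∀ c : G → Λq, DT.el c = ∑ σ : G, ιT (c σ) * uT σ := fun _ => rfl
  -- the quotient homomorphism φ : S → T
  let φfun : S → T := fun s => DT.el (fun σ => π (DS.coeff s σ))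
  have hφ_el : ∀ c : G → Λ, φfun (DS.el c) = DT.el (fun σ => π (c σ)) := by
    intro c
    simp only [φfun, DS.coeff_el]
  have hφmul : ∀ x y : S, φfun (x * y) = φfun x * φfun y := by
    intro x y
    have h2 : φfun x * φfun y =
        DT.el (fun ρ => ∑ σ : G, π (DS.coeff x σ) * σ • π (DS.coeff y (σ⁻¹ * ρ))) :=
      DT.el_mul _ _
    have h1 : φfun (x * y) =
        DT.el (fun ρ => π (∑ σ : G, DS.coeff x σ * σ • DS.coeff y (σ⁻¹ * ρ))) := by
      simp only [φfun, DS.coeff_mul]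
    rw [h1, h2]
    congr 1
    funext ρ
    rw [map_sum]
    refine Finset.sum_congr rfl fun σ _ => ?_
    rw [_root_.map_mul, hπact]
  have hφone : φfun 1 = 1 := by
    rw [show (1 : S) = DS.el (fun σ => if σ = 1 then 1 else 0) from (DS.el_one).symm, hφ_el]
    rw [← DT.el_one]
    congr 1
    funext σ
    split <;> simp
  have hφadd : ∀ x y : S, φfun (x + y) = φfun x + φfun y := by
    intro x y
    simp only [φfun, DS.coeff_add]
    rw [← DT.el_add]
    congr 1
    funext σ
    rw [map_add]
  have hφzero : φfun 0 = 0 := by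
    simp only [φfun, DS.coeff_zero]
    rw [← DT.el_zero]
    congr 1
    funext σ
    rw [map_zero]
  let φ : S →+* T :=
    { toFun := φfun, map_one' := hφone, map_mul' := hφmul, map_zero' := hφzero,
      map_add' := hφadd }
  have hφeq : ∀ s : S, φ s = φfun s := fun _ => rfl
  have hφsurj : Function.Surjective φ := by
    intro t
    refine ⟨DS.el (fun σ => (hπsurj (DT.coeff t σ)).choose), ?_⟩
    rw [hφeq, hφ_el]
    have harg : (fun σ => π ((hπsurj (DT.coeff t σ)).choose)) = DT.coeff t := by
      funext σ
      exact (hπsurj (DT.coeff t σ)).choose_spec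
    rw [harg, DT.el_coeff]
  have hφker : ∀ s : S, φ s = 0 ↔ ∀ σ : G, DS.coeff s σ ∈ r := by
    intro s
    constructor
    · intro h σ
      rw [hφeq] at h
      have h0 : φfun s = DT.el (fun _ => 0) := by rw [DT.el_zero]; exact h
      have := congrFun (DT.el_injective h0) σ
      rw [← hπker]
      exact this
    · intro h
      rw [hφeq]
      show DT.el _ = 0
      rw [← DT.el_zero]
      congr 1
      funext σ
      exact (hπker _).mpr (h σ)
  -- coefficients of products
  have hcoeff_mul_left : ∀ (x z : S), (∀ σ, DS.coeff z σ ∈ r) →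
      ∀ ρ : G, DS.coeff (x * z) ρ ∈ r := by
    intro x z hz ρ
    rw [congrFun (DS.coeff_mul x z) ρ]
    refine Ideal.sum_mem _ fun σ _ => ?_
    exact Ideal.mul_mem_left _ _ (smul_jac σ (hz _))
  -- quasi-regularity: elements with radical coefficients are in the radical
  have hIjac : ∀ s : S, (∀ σ : G, DS.coeff s σ ∈ r) → s ∈ (⊥ : Ideal S).jacobson := by
    intro s hs
    obtain ⟨N, hN⟩ := jac_pow_bot (k := k) (A := Λ)
    rw [Ideal.mem_jacobson_iff]
    intro y
    set w : S := y * s with hw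
    have hwc : ∀ σ : G, DS.coeff w σ ∈ r := hcoeff_mul_left y s hs
    -- coefficients of powers of w
    have hpow : ∀ m : ℕ, ∀ σ : G,
        DS.coeff (w ^ (m + 1)) σ ∈
          ((Submodule.restrictScalars k r) ^ (m + 1) : Submodule k Λ) := by
      intro m
      induction m with
      | zero =>
        intro σ
        rw [pow_one, pow_one]
        exact hwc σ
      | succ m ih =>
        intro σ
        rw [show w ^ (m + 1 + 1) = w ^ (m + 1) * w from pow_succ w (m + 1)]
        rw [congrFun (DS.coeff_mul (w ^ (m + 1)) w) σ]
        rw [show (m + 1 + 1) = (m + 1) + 1 from rfl, pow_succ]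
        refine Submodule.sum_mem _ fun τ _ => ?_
        exact Submodule.mul_mem_mul (ih τ) (smul_jac τ (hwc _))
    have hwN : w ^ (N + 1) = 0 := by
      have hz : DS.coeff (w ^ (N + 1)) = fun _ => 0 := by
        funext σ
        have := hpow N σ
        rw [hN] at this
        simpa using this
      rw [← DS.el_coeff (w ^ (N + 1)), hz, DS.el_zero]
    set z : S := ∑ i ∈ Finset.range (N + 1), (-w) ^ i with hzdef
    have hgeom : z * (-w - 1) = (-w) ^ (N + 1) - 1 := geom_sum_mul (-w) (N + 1)
    have hnegw : (-w) ^ (N + 1) = 0 := by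
      rcases Nat.even_or_odd (N + 1) with he | ho
      · rw [he.neg_pow, hwN]
      · rw [ho.neg_pow, hwN, neg_zero]
    have hzw : z * (w + 1) = 1 := by
      have h1 : z * (-w - 1) = -1 := by rw [hgeom, hnegw, zero_sub]
      have h2 : -w - 1 = -(w + 1) := by rw [neg_add, ← sub_eq_add_neg]
      rw [h2, mul_neg] at h1
      exact neg_injective h1
    refine ⟨z, ?_⟩
    rw [Ideal.mem_bot]
    have hfin : z * y * s + z - 1 = z * (w + 1) - 1 := by
      rw [mul_add, mul_one, hw, ← mul_assoc]
    rw [hfin, hzw, sub_self]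
  -- the Jacobson radical of T is trivial
  have hker_eq : RingHom.ker (π : Λ →+* Λq) = r := by
    ext x
    rw [RingHom.mem_ker]
    exact hπker x
  have hjacq : (⊥ : Ideal Λq).jacobson = ⊥ := by
    have hmapbot : Ideal.map (π : Λ →+* Λq) r = ⊥ := by
      rw [eq_bot_iff, Ideal.map_le_iff_le_comap]
      intro x hx
      simp only [Ideal.mem_comap, Ideal.mem_bot]
      exact (hπker x).mpr hx
    have hmapjac := Ideal.map_jacobson_of_surjective (I := r)
      (f := (π : Λ →+* Λq)) hπsurj (le_of_eq hker_eq)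
    have hridem : r.jacobson = r := by
      rw [hrdef]
      exact Ideal.jacobson_idem
    rw [hridem, hmapbot] at hmapjac
    exact hmapjac.symm
  haveI : Module.Finite k Λq :=
    Module.Finite.of_surjective (π.toLinearMap : Λ →ₗ[k] Λq) hπsurj
  haveI hssr : IsSemisimpleRing Λq := ssr (k := k) hjacq
  have hJT : ∀ t ∈ (⊥ : Ideal T).jacobson, t = 0 := by
    letI : Module Λq T := Module.compHom T (ιT : Λq →+* T)
    set N : Ideal T := (⊥ : Ideal T).jacobson with hNdef
    let Nq : Submodule Λq T :=
      { carrier := N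
        add_mem' := fun h1 h2 => N.add_mem h1 h2
        zero_mem' := N.zero_mem
        smul_mem' := fun a t ht => N.mul_mem_left (ιT a) ht }
    haveI : IsSemisimpleModule Λq T := inferInstance
    obtain ⟨C, hC⟩ := exists_isCompl Nq
    let f : T →ₗ[Λq] Nq := Submodule.projectionOnto Nq C hC
    have hmemNq : ∀ {x : T}, x ∈ N → x ∈ Nq := fun hx => hx
    have hfval : ∀ {x : T} (hx : x ∈ N), (f x : T) = x := by
      intro x hx
      have := Submodule.linearProjOfIsCompl_apply_left hC ⟨x, hmemNq hx⟩
      rw [show ((⟨x, hmemNq hx⟩ : Nq) : T) = x from rfl] at this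
      rw [this]
    have hfiota : ∀ (a : Λq) (y : T), ((f (ιT a * y) : Nq) : T) = ιT a * (f y : T) := by
      intro a y
      have h1 : ιT a * y = a • y := rfl
      rw [h1, f.map_smul]
      rfl
    let F : T → T := fun x =>
      (Fintype.card G : k)⁻¹ • ∑ σ : G, uT σ⁻¹ * ((f (uT σ * x) : Nq) : T)
    have hFN : ∀ x : T, F x ∈ N := by
      intro x
      have hsum : (∑ σ : G, uT σ⁻¹ * ((f (uT σ * x) : Nq) : T)) ∈ N := by
        refine Submodule.sum_mem _ fun σ _ => ?_
        exact N.mul_mem_left _ (f (uT σ * x)).2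
      rw [show F x = (Fintype.card G : k)⁻¹ • ∑ σ : G, uT σ⁻¹ * ((f (uT σ * x) : Nq) : T)
        from rfl, Algebra.smul_def]
      exact N.mul_mem_left _ hsum
    have hFid : ∀ x ∈ N, F x = x := by
      intro x hx
      have hterm : ∀ σ : G, uT σ⁻¹ * ((f (uT σ * x) : Nq) : T) = x := by
        intro σ
        rw [hfval (N.mul_mem_left (uT σ) hx), ← mul_assoc, DT.u_inv_mul, one_mul]
      rw [show F x = (Fintype.card G : k)⁻¹ • ∑ σ : G, uT σ⁻¹ * ((f (uT σ * x) : Nq) : T)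
        from rfl]
      rw [Finset.sum_congr rfl fun σ _ => hterm σ, Finset.sum_const, Finset.card_univ,
        ← Nat.cast_smul_eq_nsmul k, smul_smul, inv_mul_cancel₀ hcard, one_smul]
    have hFadd : ∀ x y : T, F (x + y) = F x + F y := by
      intro x y
      show (Fintype.card G : k)⁻¹ • _ = (Fintype.card G : k)⁻¹ • _ + (Fintype.card G : k)⁻¹ • _
      rw [← smul_add, ← Finset.sum_add_distrib]
      congr 1
      refine Finset.sum_congr rfl fun σ _ => ?_
      rw [mul_add, map_add, ← mul_add]
      rfl
    have hFzero : F 0 = 0 := by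
      show (Fintype.card G : k)⁻¹ • _ = (0 : T)
      have : ∀ σ : G, uT σ⁻¹ * ((f (uT σ * 0) : Nq) : T) = 0 := by
        intro σ
        rw [mul_zero, map_zero]
        show uT σ⁻¹ * (0 : T) = 0
        rw [mul_zero]
      rw [Finset.sum_congr rfl fun σ _ => this σ, Finset.sum_const_zero, smul_zero]
    have hFsum : ∀ {α : Type} (s : Finset α) (g : α → T),
        F (∑ i ∈ s, g i) = ∑ i ∈ s, F (g i) := by
      intro α s g
      induction s using Finset.induction_on with
      | empty => simpa using hFzero
      | insert _ _ hnot ih =>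
        rw [Finset.sum_insert hnot, Finset.sum_insert hnot, hFadd, ih]
    have hFiota : ∀ (a : Λq) (x : T), F (ιT a * x) = ιT a * F x := by
      intro a x
      show (Fintype.card G : k)⁻¹ • _ = ιT a * ((Fintype.card G : k)⁻¹ • _)
      rw [mul_smul_comm, Finset.mul_sum]
      congr 1
      refine Finset.sum_congr rfl fun σ _ => ?_
      have h1 : uT σ * (ιT a * x) = ιT (σ • a) * (uT σ * x) := by
        rw [← mul_assoc, hcommT, mul_assoc]
      rw [h1, hfiota, ← mul_assoc, ← mul_assoc]
      congr 1
      rw [hcommT σ⁻¹, inv_smul_smul]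
    have hFu : ∀ (τ : G) (x : T), F (uT τ * x) = uT τ * F x := by
      intro τ x
      show (Fintype.card G : k)⁻¹ • _ = uT τ * ((Fintype.card G : k)⁻¹ • _)
      rw [mul_smul_comm, Finset.mul_sum]
      congr 1
      refine Fintype.sum_equiv (Equiv.mulRight τ) _ _ fun σ => ?_
      simp only [Equiv.coe_mulRight]
      have h1 : uT σ * (uT τ * x) = uT (σ * τ) * x := by rw [← mul_assoc, huTmul]
      rw [h1, ← mul_assoc]
      congr 1
      rw [mul_inv_rev, huTmul, mul_inv_cancel_left]
    have hFlin : ∀ (t x : T), F (t * x) = t * F x := by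
      intro t x
      have hrep : t = ∑ σ : G, ιT (DT.coeff t σ) * uT σ := (DT.el_coeff t).symm
      rw [hrep, Finset.sum_mul, hFsum, Finset.sum_mul]
      refine Finset.sum_congr rfl fun σ _ => ?_
      rw [mul_assoc, hFiota, hFu, ← mul_assoc]
    -- the idempotent
    set e : T := F 1 with hedef
    have heN : e ∈ N := hFN 1
    have hxe : ∀ x ∈ N, x = x * e := by
      intro x hx
      calc x = F x := (hFid x hx).symm
        _ = F (x * 1) := by rw [mul_one]
        _ = x * e := hFlin x 1
    have hee : e = e * e := hxe e heN
    have he0 : e = 0 := by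
      obtain ⟨z, hz⟩ := Ideal.mem_jacobson_iff.mp heN (-1)
      rw [Ideal.mem_bot] at hz
      have hz1 : z * (1 - e) = 1 := by
        have h3 : z * (1 - e) = z * -1 * e + z := by noncomm_ring
        rw [h3, ← sub_eq_zero]
        exact hz
      calc e = 1 * e := (one_mul e).symm
        _ = (z * (1 - e)) * e := by rw [hz1]
        _ = z * ((1 - e) * e) := by rw [mul_assoc]
        _ = z * (e - e * e) := by rw [sub_mul, one_mul]
        _ = z * 0 := by rw [← hee, sub_self]
        _ = 0 := mul_zero z
    intro t ht
    calc t = t * e := hxe t ht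
      _ = 0 := by rw [he0, mul_zero]
  -- J(T) = ⊥ as an ideal
  have hJTbot : (⊥ : Ideal T).jacobson = ⊥ := by
    rw [eq_bot_iff]
    intro t ht
    rw [Ideal.mem_bot]
    exact hJT t ht
  -- forward inclusion: J(S) maps to 0 under φ
  have hfwd : ∀ s ∈ (⊥ : Ideal S).jacobson, φ s = 0 := by
    intro s hs
    have hcj := Ideal.comap_jacobson_of_surjective (f := φ) hφsurj (K := (⊥ : Ideal T))
    have hle : (⊥ : Ideal S).jacobson ≤ Ideal.comap φ ((⊥ : Ideal T).jacobson) := by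
      rw [hcj]
      exact Ideal.jacobson_mono bot_le
    have := hle hs
    rw [Ideal.mem_comap, hJTbot, Ideal.mem_bot] at this
    exact this
  -- the main equivalence
  have hiff : ∀ s : S, s ∈ (⊥ : Ideal S).jacobson ↔ φ s = 0 := by
    intro s
    constructor
    · exact hfwd s
    · intro h
      exact hIjac s ((hφker s).mp h)
  constructor
  · intro s
    rw [hiff s]
    constructor
    · intro h
      exact ⟨DS.coeff s, (hφker s).mp h, by rw [← hDSel, DS.el_coeff]⟩
    · rintro ⟨c, hc, hrep⟩
      rw [(hφker s).mpr]
      intro σ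
      rw [show s = DS.el c from hrep, DS.coeff_el]
      exact hc σ
  · refine ⟨TwoSidedIdeal.ker φ, ?_, ?_⟩
    · intro s
      rw [TwoSidedIdeal.mem_ker, hiff s]
    · have hlift : ∀ a b : S, (TwoSidedIdeal.ker φ).ringCon a b → φ a = φ b := fun a b h => h
      let ψ : (TwoSidedIdeal.ker φ).ringCon.Quotient →+* T :=
        { toFun := Quotient.lift (φ : S → T) hlift
          map_one' := map_one φ
          map_mul' := fun x y => Quotient.inductionOn₂ x y fun a b => map_mul φ a b
          map_zero' := map_zero φ
          map_add' := fun x y => Quotient.inductionOn₂ x y fun a b => map_add φ a b }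
      have hψmk : ∀ s : S, ψ (RingCon.mk' (TwoSidedIdeal.ker φ).ringCon s) = φ s :=
        fun _ => rfl
      have hψbij : Function.Bijective ψ := by
        constructor
        · intro x y
          refine Quotient.inductionOn₂ x y fun a b h => ?_
          exact Quotient.sound h
        · intro t
          obtain ⟨s, hs⟩ := hφsurj t
          exact ⟨RingCon.mk' _ s, by rw [hψmk, hs]⟩
      refine ⟨RingEquiv.ofBijective ψ hψbij, ?_⟩
      intro c
      have h1 : RingEquiv.ofBijective ψ hψbij (RingCon.mk' (TwoSidedIdeal.ker φ).ringCon
          (algebraMap k S c)) = φ (algebraMap k S c) := rfl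
      rw [h1]
      have h2 : algebraMap k S c = ι (algebraMap k Λ c) := (ι.commutes c).symm
      rw [h2]
      have h3 : φ (ι (algebraMap k Λ c)) = ιT (π (algebraMap k Λ c)) := by
        rw [hφeq]
        show DT.el (fun σ => π (DS.coeff (DS.ι (algebraMap k Λ c)) σ)) = _
        rw [← DT.el_iota]
        congr 1
        funext σ
        rw [congrFun (DS.coeff_iota (algebraMap k Λ c)) σ]
        split <;> simp
      rw [h3, π.commutes, ιT.commutes]
end
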